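/- For every squarefree positive integer k and every positive integer n, the number of pairs (x,d) of positive integers with n = x² + k·d² is at most 6·τ(n), where τ(n) is the number of divisors of n. -/

import Mathlib

open Finset

namespace RepCountAux

/-! ### Canonical roots -/

noncomputable def sig (k q : ℕ) : ZMod q :=
  letI := Classical.propDecidable (∃ t : ZMod q, t ^ 2 = -(k : ZMod q))
  if h : ∃ t : ZMod q, t ^ 2 = -(k : ZMod q) then h.choose else 0

lemma sig_spec {k q : ℕ} {t : ZMod q} (h : t ^ 2 = -(k : ZMod q)) :
    (sig k q) ^ 2 = -(k : ZMod q) := by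
  have hex : ∃ t : ZMod q, t ^ 2 = -(k : ZMod q) := ⟨t, h⟩
  unfold sig
  rw [dif_pos hex]
  exact hex.choose_spec

lemma root_val_dvd {q k : ℕ} [NeZero q] {s : ZMod q} (hs : s ^ 2 = -(k : ZMod q)) :
    q ∣ s.val ^ 2 + k := by
  have h0 : ((s.val ^ 2 + k : ℕ) : ZMod q) = 0 := by
    push_cast
    rw [ZMod.natCast_val, ZMod.cast_id, hs]
    ring
  exact (ZMod.natCast_eq_zero_iff _ _).1 h0

lemma subsingleton_of_eq_one {q : ℕ} (h : q = 1) (s t : ZMod q) : s = t := by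
  haveI : Subsingleton (ZMod q) := by rw [h]; infer_instance
  exact Subsingleton.elim s t

lemma int_dvd_of_sq_eq {q : ℕ} [NeZero q] {s t : ZMod q} (h : s ^ 2 = t ^ 2) :
    (q : ℤ) ∣ ((s.val : ℤ) - t.val) * ((s.val : ℤ) + t.val) := by
  have h1 : ((s.val ^ 2 : ℕ) : ZMod q) = ((t.val ^ 2 : ℕ) : ZMod q) := by
    push_cast
    rw [ZMod.natCast_val, ZMod.cast_id, ZMod.natCast_val, ZMod.cast_id, h]
  have h2 : (s.val ^ 2 : ℕ) ≡ (t.val ^ 2 : ℕ) [MOD q] := (ZMod.natCast_eq_natCast_iff _ _ _).1 h1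
  have h3 : (q : ℤ) ∣ (t.val ^ 2 : ℤ) - (s.val ^ 2 : ℤ) := by
    have := h2.dvd
    exact_mod_cast this
  have h4 : (q : ℤ) ∣ (s.val ^ 2 : ℤ) - (t.val ^ 2 : ℤ) := by
    obtain ⟨c, hc⟩ := h3
    exact ⟨-c, by linarith⟩
  convert h4 using 1; ring

/-! ### Structure of roots modulo prime powers -/

lemma odd_root_cases {p f k : ℕ} (hp : p.Prime) (hp2 : p ≠ 2) (hpk : ¬ p ∣ k)
    {s t : ZMod (p ^ f)} (hs : s ^ 2 = -(k : ZMod (p ^ f))) (ht : t ^ 2 = -(k : ZMod (p ^ f))) :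
    s = t ∨ s = -t := by
  rcases Nat.eq_zero_or_pos f with rfl | hf
  · exact Or.inl (subsingleton_of_eq_one (pow_zero p) s t)
  haveI : NeZero (p ^ f) := ⟨pow_ne_zero _ hp.ne_zero⟩
  have hpq : p ∣ p ^ f := dvd_pow_self p hf.ne'
  have hps : ¬ p ∣ s.val := by
    intro hdvd
    have h1 : p ∣ s.val ^ 2 + k := dvd_trans hpq (root_val_dvd hs)
    have h2 : p ∣ s.val ^ 2 := by exact Dvd.dvd.pow hdvd (by norm_num)
    have h3 := Nat.dvd_sub h1 h2
    exact hpk (by simpa using h3)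
  have hd := int_dvd_of_sq_eq (hs.trans ht.symm)
  have hpi : Prime (p : ℤ) := Nat.prime_iff_prime_int.mp hp
  by_cases hcase : (p : ℤ) ∣ ((s.val : ℤ) - t.val)
  · have hns : ¬ (p : ℤ) ∣ ((s.val : ℤ) + t.val) := by
      intro h2
      have h3 : (p : ℤ) ∣ 2 * (s.val : ℤ) := by
        have := dvd_add hcase h2; rwa [show (s.val : ℤ) - t.val + (s.val + t.val) = 2 * s.val by ring] at this
      rcases hpi.dvd_mul.mp h3 with h4 | h4
      · have h5 : (p : ℕ) ∣ 2 := by exact_mod_cast h4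
        exact hp2 ((Nat.prime_dvd_prime_iff_eq hp Nat.prime_two).mp h5)
      · exact hps (by exact_mod_cast h4)
    have hcop : IsCoprime ((p : ℤ) ^ f) ((s.val : ℤ) + t.val) :=
      ((hpi.coprime_iff_not_dvd).mpr hns).pow_left
    have h5 : ((p : ℤ) ^ f) ∣ ((s.val : ℤ) - t.val) :=
      hcop.dvd_of_dvd_mul_right (by push_cast at hd ⊢; exact hd)
    left
    have h6 : (s.val : ZMod (p ^ f)) = (t.val : ZMod (p ^ f)) := by
      rw [ZMod.natCast_eq_natCast_iff]
      rw [Nat.modEq_iff_dvd]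
      push_cast
      obtain ⟨c, hc⟩ := h5
      exact ⟨-c, by linarith⟩
    rwa [ZMod.natCast_val, ZMod.cast_id, ZMod.natCast_val, ZMod.cast_id] at h6
  · have hcop : IsCoprime ((p : ℤ) ^ f) ((s.val : ℤ) - t.val) :=
      ((hpi.coprime_iff_not_dvd).mpr hcase).pow_left
    have h5 : ((p : ℤ) ^ f) ∣ ((s.val : ℤ) + t.val) :=
      hcop.dvd_of_dvd_mul_left (by push_cast at hd ⊢; exact hd)
    right
    have h6 : ((s.val + t.val : ℕ) : ZMod (p ^ f)) = ((0 : ℕ) : ZMod (p ^ f)) := by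
      rw [ZMod.natCast_eq_natCast_iff]
      rw [Nat.modEq_iff_dvd]
      push_cast
      obtain ⟨c, hc⟩ := h5
      exact ⟨-c, by linarith⟩
    push_cast at h6
    rw [ZMod.natCast_val, ZMod.cast_id, ZMod.natCast_val, ZMod.cast_id] at h6
    linear_combination h6

lemma dvd_root_f_le_one {p f k : ℕ} (hp : p.Prime) (hk : Squarefree k) (hpk : p ∣ k)
    {s : ZMod (p ^ f)} (hs : s ^ 2 = -(k : ZMod (p ^ f))) : f ≤ 1 := by
  by_contra hf
  push_neg at hf
  haveI : NeZero (p ^ f) := ⟨pow_ne_zero _ hp.ne_zero⟩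
  have hq : p ^ f ∣ s.val ^ 2 + k := root_val_dvd hs
  have h2 : p ^ 2 ∣ s.val ^ 2 + k := dvd_trans (pow_dvd_pow _ (by omega)) hq
  have hpv : p ∣ s.val := by
    have h1 : p ∣ s.val ^ 2 + k := dvd_trans (dvd_pow_self p (by omega : (2:ℕ) ≠ 0)) h2
    have h3 : p ∣ s.val ^ 2 := by
      have := Nat.dvd_sub h1 hpk
      simpa using this
    exact hp.dvd_of_dvd_pow h3
  have h4 : p ^ 2 ∣ s.val ^ 2 := pow_dvd_pow_of_dvd hpv 2
  have h5 : p ^ 2 ∣ k := by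
    have := Nat.dvd_sub h2 h4
    simpa using this
  exact hp.not_isUnit (hk p (by rwa [← sq]))

lemma dvd_root_unique {p f k : ℕ} (hp : p.Prime) (hk : Squarefree k) (hpk : p ∣ k)
    {s t : ZMod (p ^ f)} (hs : s ^ 2 = -(k : ZMod (p ^ f))) (ht : t ^ 2 = -(k : ZMod (p ^ f))) :
    s = t := by
  have hf := dvd_root_f_le_one hp hk hpk hs
  interval_cases f
  · exact subsingleton_of_eq_one (pow_zero p) s t
  · haveI : NeZero (p ^ 1) := ⟨pow_ne_zero _ hp.ne_zero⟩
    have key : ∀ u : ZMod (p ^ 1), u ^ 2 = -(k : ZMod (p ^ 1)) → u = 0 := by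
      intro u hu
      have h1 : p ^ 1 ∣ u.val ^ 2 + k := root_val_dvd hu
      have h1' : p ∣ u.val ^ 2 + k := dvd_trans (dvd_pow_self p one_ne_zero) h1
      have h2 : p ∣ u.val ^ 2 := by
        have := Nat.dvd_sub h1' hpk; simpa using this
      have h3 : p ∣ u.val := hp.dvd_of_dvd_pow h2
      have hlt : u.val < p := by
        have := ZMod.val_lt u; simpa using this
      have h4 : u.val = 0 := by
        rcases Nat.eq_zero_or_pos u.val with h | h
        · exact h
        · exact absurd (Nat.le_of_dvd h h3) (by omega)
      rwa [ZMod.val_eq_zero] at h4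
    exact (key s hs).trans (key t ht).symm

lemma intCast_halfway {f : ℕ} {w : ℤ} (h : (2:ℤ) ^ (f - 1) ∣ w) :
    (w : ZMod (2 ^ f)) = 0 ∨ (w : ZMod (2 ^ f)) = 2 ^ (f - 1) := by
  rcases Nat.eq_zero_or_pos f with rfl | hf
  · exact Or.inl (subsingleton_of_eq_one (pow_zero 2) _ _)
  obtain ⟨c, rfl⟩ := h
  have h2f : (2:ℤ) ^ f = 2 ^ (f - 1) * 2 := by
    rw [← pow_succ]; congr 1; omega
  have hz : (2 : ZMod (2 ^ f)) ^ f = 0 := by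
    have := ZMod.natCast_self (2 ^ f)
    push_cast at this
    exact this
  rcases Int.even_or_odd c with ⟨c', rfl⟩ | ⟨c', rfl⟩
  · left
    have he : (2:ℤ) ^ (f-1) * (c' + c') = (2:ℤ) ^ f * c' := by rw [h2f]; ring
    rw [he]
    push_cast
    rw [hz, zero_mul]
  · right
    have he : (2:ℤ) ^ (f-1) * (2 * c' + 1) = (2:ℤ) ^ f * c' + 2 ^ (f-1) := by rw [h2f]; ring
    rw [he]
    push_cast
    rw [hz, zero_mul, zero_add]

lemma two_root_cases {f k : ℕ} (hk : Squarefree k) (hf : 3 ≤ f)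
    {s t : ZMod (2 ^ f)} (hs : s ^ 2 = -(k : ZMod (2 ^ f))) (ht : t ^ 2 = -(k : ZMod (2 ^ f))) :
    s = t ∨ s = -t ∨ s = t + 2 ^ (f - 1) ∨ s = -t + 2 ^ (f - 1) := by
  haveI : NeZero (2 ^ f) := ⟨pow_ne_zero _ two_ne_zero⟩
  have hko : ¬ 2 ∣ k := by
    intro h2k
    have := dvd_root_f_le_one Nat.prime_two hk h2k hs
    omega
  have hodd : ∀ u : ZMod (2 ^ f), u ^ 2 = -(k : ZMod (2 ^ f)) → ¬ 2 ∣ u.val := by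
    intro u hu h2u
    have h1 : 2 ∣ u.val ^ 2 + k :=
      dvd_trans (dvd_pow_self 2 (by omega : f ≠ 0)) (root_val_dvd hu)
    have h2 : 2 ∣ u.val ^ 2 := Dvd.dvd.pow h2u (by norm_num)
    exact hko (by have := Nat.dvd_sub h1 h2; simpa using this)
  have hso := hodd s hs
  have hto := hodd t ht
  set A : ℤ := (s.val : ℤ) with hA_def
  set B : ℤ := (t.val : ℤ) with hB_def
  have hA : ¬ (2:ℤ) ∣ A := fun h => hso (by rw [hA_def] at h; exact_mod_cast h)
  have hB : ¬ (2:ℤ) ∣ B := fun h => hto (by rw [hB_def] at h; exact_mod_cast h)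
  have hd : (2:ℤ) ^ f ∣ (A - B) * (A + B) := by
    have := int_dvd_of_sq_eq (hs.trans ht.symm)
    push_cast at this ⊢
    exact this
  have h2f : (2:ℤ) ^ f = 2 * 2 ^ (f - 1) := by
    rw [← pow_succ']; congr 1; omega
  have hsub : (2:ℤ) ∣ A - B := by
    rcases Int.even_or_odd A with hA2 | hA2
    · exact absurd hA2.two_dvd hA
    rcases Int.even_or_odd B with hB2 | hB2
    · exact absurd hB2.two_dvd hB
    obtain ⟨a', ha⟩ := hA2; obtain ⟨b', hb⟩ := hB2
    exact ⟨a' - b', by omega⟩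
  have hadd : (2:ℤ) ∣ A + B := by
    obtain ⟨c, hc⟩ := hsub; exact ⟨c + B, by omega⟩
  have hcastsub : ((A - B : ℤ) : ZMod (2^f)) = s - t := by
    simp only [hA_def, hB_def]
    push_cast [ZMod.natCast_val, ZMod.cast_id]
    ring
  have hcastadd : ((A + B : ℤ) : ZMod (2^f)) = s + t := by
    simp only [hA_def, hB_def]
    push_cast [ZMod.natCast_val, ZMod.cast_id]
    ring
  by_cases h4 : (4:ℤ) ∣ A - B
  · have h4' : ¬ (4:ℤ) ∣ A + B := by
      intro hc
      have : (4:ℤ) ∣ 2 * A := by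
        obtain ⟨c1, hc1⟩ := h4; obtain ⟨c2, hc2⟩ := hc
        exact ⟨c1 + c2, by omega⟩
      obtain ⟨c3, hc3⟩ := this
      exact hA ⟨c3, by omega⟩
    obtain ⟨u, hu⟩ := hadd
    have huo : ¬ (2:ℤ) ∣ u := by
      intro ⟨c4, hc4⟩; exact h4' ⟨c4, by omega⟩
    have hdvd1 : (2:ℤ) ^ (f-1) ∣ (A - B) * u := by
      have h1 : (2:ℤ) * ((A - B) * u) = (A - B) * (A + B) := by rw [hu]; ring
      have h2 : (2:ℤ) * 2 ^ (f-1) ∣ 2 * ((A - B) * u) := by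
        rw [h1, ← h2f]; exact hd
      exact (mul_dvd_mul_iff_left (by norm_num : (2:ℤ) ≠ 0)).mp h2
    have hcop : IsCoprime ((2:ℤ) ^ (f-1)) u :=
      ((Nat.prime_iff_prime_int.mp Nat.prime_two).coprime_iff_not_dvd.mpr huo).pow_left
    have hfin : (2:ℤ) ^ (f-1) ∣ A - B := hcop.dvd_of_dvd_mul_right hdvd1
    rcases intCast_halfway hfin with h | h
    · left
      rw [hcastsub] at h
      linear_combination h
    · right; right; left
      rw [hcastsub] at h
      linear_combination h
  · obtain ⟨u, hu⟩ := hsub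
    have huo : ¬ (2:ℤ) ∣ u := by
      intro ⟨c4, hc4⟩; exact h4 ⟨c4, by omega⟩
    have hdvd1 : (2:ℤ) ^ (f-1) ∣ u * (A + B) := by
      have h1 : (2:ℤ) * (u * (A + B)) = (A - B) * (A + B) := by rw [hu]; ring
      have h2 : (2:ℤ) * 2 ^ (f-1) ∣ 2 * (u * (A + B)) := by rw [h1, ← h2f]; exact hd
      exact (mul_dvd_mul_iff_left (by norm_num : (2:ℤ) ≠ 0)).mp h2
    have hcop : IsCoprime ((2:ℤ) ^ (f-1)) u :=
      ((Nat.prime_iff_prime_int.mp Nat.prime_two).coprime_iff_not_dvd.mpr huo).pow_left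
    have hfin : (2:ℤ) ^ (f-1) ∣ A + B := hcop.dvd_of_dvd_mul_left hdvd1
    rcases intCast_halfway hfin with h | h
    · right; left
      rw [hcastadd] at h
      linear_combination h
    · right; right; right
      rw [hcastadd] at h
      linear_combination h

/-! ### factorization / CRT helpers -/

lemma prod_primes_pow_ne_zero {P : Finset ℕ} (hP : ∀ p ∈ P, p.Prime) (c : ℕ → ℕ) :
    (∏ p ∈ P, p ^ c p) ≠ 0 := by
  rw [Finset.prod_ne_zero_iff]
  intro p hp
  exact pow_ne_zero _ (hP p hp).ne_zero

lemma factorization_prod_primes_pow {P : Finset ℕ} (hP : ∀ p ∈ P, p.Prime) (c : ℕ → ℕ)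
    (q : ℕ) : (∏ p ∈ P, p ^ c p).factorization q = if q ∈ P then c q else 0 := by
  induction P using Finset.induction_on with
  | empty => simp
  | @insert a T ha ih =>
    have haP : a.Prime := hP a (mem_insert_self a T)
    have hT : ∀ p ∈ T, p.Prime := fun p hp => hP p (mem_insert_of_mem hp)
    rw [Finset.prod_insert ha, Nat.factorization_mul (pow_ne_zero _ haP.ne_zero)
      (prod_primes_pow_ne_zero hT c)]
    simp only [Finsupp.coe_add, Pi.add_apply, ih hT]
    rw [Nat.Prime.factorization_pow haP]
    by_cases hq : q = a
    · subst hq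
      simp [ha, Finsupp.single_apply]
    · simp [hq, Finsupp.single_apply, Ne.symm hq, mem_insert]

lemma modEq_prod {P : Finset ℕ} (hP : ∀ p ∈ P, p.Prime) (c : ℕ → ℕ) {u v : ℕ}
    (h : ∀ p ∈ P, u ≡ v [MOD p ^ c p]) : u ≡ v [MOD ∏ p ∈ P, p ^ c p] := by
  induction P using Finset.induction_on with
  | empty => simp [Nat.modEq_one]
  | @insert a T ha ih =>
    have haP : a.Prime := hP a (mem_insert_self a T)
    have hT : ∀ p ∈ T, p.Prime := fun p hp => hP p (mem_insert_of_mem hp)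
    rw [Finset.prod_insert ha]
    have hcop : Nat.Coprime (a ^ c a) (∏ p ∈ T, p ^ c p) := by
      apply Nat.Coprime.prod_right
      intro p hp
      exact Nat.Coprime.pow _ _ ((Nat.coprime_primes haP (hT p hp)).mpr (fun he => ha (he ▸ hp)))
    exact (Nat.modEq_and_modEq_iff_modEq_mul hcop).mp
      ⟨h a (mem_insert_self a T), ih hT (fun p hp => h p (mem_insert_of_mem hp))⟩

lemma modEq_of_forall_prime_pow {m : ℕ} (hm : m ≠ 0) {u v : ℕ}
    (h : ∀ p ∈ m.primeFactors, u ≡ v [MOD p ^ m.factorization p]) : u ≡ v [MOD m] := by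
  have hprod : (∏ p ∈ m.primeFactors, p ^ m.factorization p) = m := by
    conv_rhs => rw [← Nat.factorization_prod_pow_eq_self hm]
    rfl
  rw [← hprod]
  exact modEq_prod (fun p hp => Nat.prime_of_mem_primeFactors hp) _ h

lemma cast_root {m q k : ℕ} [NeZero m] (hq : q ∣ m) {s : ZMod m}
    (hs : s ^ 2 = -(k : ZMod m)) :
    ((s.val : ZMod q)) ^ 2 = -(k : ZMod q) := by
  have h1 : ((s.val : ZMod q)) = ZMod.castHom hq (ZMod q) s := by
    rw [ZMod.castHom_apply, ZMod.natCast_val]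
  rw [h1, ← map_pow, hs]
  rw [map_neg, map_natCast]

/-! ### The encoding map -/

noncomputable def sOf (k n x y : ℕ) : ZMod (n / (Nat.gcd x y) ^ 2) :=
  ((x / Nat.gcd x y : ℕ) : ZMod (n / (Nat.gcd x y) ^ 2)) *
    ((y / Nat.gcd x y : ℕ) : ZMod (n / (Nat.gcd x y) ^ 2))⁻¹

def fOf (n x y : ℕ) (p : ℕ) : ℕ := (n / (Nat.gcd x y) ^ 2).factorization p

noncomputable def FF (k n x y : ℕ) : Finset ℕ :=
  @Finset.filter ℕ (fun p => p ≠ 2 ∧ ¬ p ∣ k ∧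
    (((sOf k n x y).val : ZMod (p ^ fOf n x y p)) = sig k (p ^ fOf n x y p)))
    (Classical.decPred _) n.primeFactors

lemma mem_FF {k n x y p : ℕ} : p ∈ FF k n x y ↔ p ∈ n.primeFactors ∧ p ≠ 2 ∧ ¬ p ∣ k ∧
    (((sOf k n x y).val : ZMod (p ^ fOf n x y p)) = sig k (p ^ fOf n x y p)) := by
  rw [FF]
  exact @Finset.mem_filter ℕ _ (Classical.decPred _) _ _

noncomputable def dOf (k n x y : ℕ) : ℕ :=
  Nat.gcd x y * ∏ p ∈ FF k n x y, p ^ fOf n x y p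

noncomputable def jOf (k n x y : ℕ) : ℕ :=
  if fOf n x y 2 ≤ 2 then (((sOf k n x y).val : ZMod (2 ^ fOf n x y 2))).val
  else if ((sOf k n x y).val : ZMod (2 ^ fOf n x y 2)) = sig k (2 ^ fOf n x y 2) then 0
  else if ((sOf k n x y).val : ZMod (2 ^ fOf n x y 2)) = - sig k (2 ^ fOf n x y 2) then 1
  else if ((sOf k n x y).val : ZMod (2 ^ fOf n x y 2))
      = sig k (2 ^ fOf n x y 2) + 2 ^ (fOf n x y 2 - 1) then 2
  else 3

noncomputable def phi (k n : ℕ) (pt : ℕ × ℕ) : ℕ × ℕ :=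
  (dOf k n pt.1 pt.2, jOf k n pt.1 pt.2)

/-! ### basic properties of a representation -/

lemma point_props {k n x y : ℕ} (hx : 0 < x) (hy : 0 < y)
    (hxy : n = x ^ 2 + k * y ^ 2) :
    0 < Nat.gcd x y ∧
    n = (Nat.gcd x y) ^ 2 * (n / (Nat.gcd x y) ^ 2) ∧
    (n / (Nat.gcd x y) ^ 2) = (x / Nat.gcd x y) ^ 2 + k * (y / Nat.gcd x y) ^ 2 ∧
    Nat.Coprime (x / Nat.gcd x y) (y / Nat.gcd x y) ∧
    0 < x / Nat.gcd x y ∧ 0 < y / Nat.gcd x y := by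
  set g := Nat.gcd x y with hg_def
  have hg : 0 < g := Nat.gcd_pos_of_pos_left _ hx
  have hgx : Nat.gcd x y ∣ x := Nat.gcd_dvd_left x y
  have hgy : Nat.gcd x y ∣ y := Nat.gcd_dvd_right x y
  have hx1 : Nat.gcd x y * (x / Nat.gcd x y) = x := Nat.mul_div_cancel' hgx
  have hy1 : Nat.gcd x y * (y / Nat.gcd x y) = y := Nat.mul_div_cancel' hgy
  have hnval : n = (Nat.gcd x y) ^ 2 * ((x / Nat.gcd x y) ^ 2 + k * (y / Nat.gcd x y) ^ 2) := by
    calc n = x ^ 2 + k * y ^ 2 := hxy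
      _ = (g * (x / g)) ^ 2 + k * (g * (y / g)) ^ 2 := by rw [hx1, hy1]
      _ = g ^ 2 * ((x / g) ^ 2 + k * (y / g) ^ 2) := by ring
  have hm : n / (Nat.gcd x y) ^ 2 = (x / Nat.gcd x y) ^ 2 + k * (y / Nat.gcd x y) ^ 2 := by
    conv_lhs => rw [hnval]
    rw [Nat.mul_div_cancel_left _ (pow_pos hg 2)]
  refine ⟨hg, ?_, hm, Nat.coprime_div_gcd_div_gcd hg, ?_, ?_⟩
  · rw [hm, hnval]
  · rcases Nat.eq_zero_or_pos (x / Nat.gcd x y) with h | h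
    · exfalso; rw [h, mul_zero] at hx1; omega
    · exact h
  · rcases Nat.eq_zero_or_pos (y / Nat.gcd x y) with h | h
    · exfalso; rw [h, mul_zero] at hy1; omega
    · exact h

lemma coprime_y1_m {k n x y : ℕ}
    (hm : (n / (Nat.gcd x y) ^ 2) = (x / Nat.gcd x y) ^ 2 + k * (y / Nat.gcd x y) ^ 2)
    (hcop : Nat.Coprime (x / Nat.gcd x y) (y / Nat.gcd x y)) :
    Nat.Coprime (y / Nat.gcd x y) (n / (Nat.gcd x y) ^ 2) := by
  by_contra h
  obtain ⟨p, hp, hpy, hpm⟩ := Nat.Prime.not_coprime_iff_dvd.mp h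
  have h1 : p ∣ k * (y / Nat.gcd x y) ^ 2 := Dvd.dvd.mul_left (Dvd.dvd.pow hpy two_ne_zero) k
  have h2 : p ∣ (x / Nat.gcd x y) ^ 2 := by
    have := Nat.dvd_sub (hm ▸ hpm) h1
    simpa using this
  have h3 : p ∣ x / Nat.gcd x y := hp.dvd_of_dvd_pow h2
  have h4 : p ∣ Nat.gcd (x / Nat.gcd x y) (y / Nat.gcd x y) := Nat.dvd_gcd h3 hpy
  rw [hcop] at h4
  exact hp.one_lt.ne' (Nat.dvd_one.mp h4)

lemma s_props {k n x y : ℕ}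
    (hm : (n / (Nat.gcd x y) ^ 2) = (x / Nat.gcd x y) ^ 2 + k * (y / Nat.gcd x y) ^ 2)
    (hcop : Nat.Coprime (x / Nat.gcd x y) (y / Nat.gcd x y)) :
    (sOf k n x y) ^ 2 = -(k : ZMod (n / (Nat.gcd x y) ^ 2)) ∧
    (sOf k n x y) * ((y / Nat.gcd x y : ℕ) : ZMod (n / (Nat.gcd x y) ^ 2))
      = ((x / Nat.gcd x y : ℕ) : ZMod (n / (Nat.gcd x y) ^ 2)) := by
  have hcopm := coprime_y1_m hm hcop
  have hyu : IsUnit ((y / Nat.gcd x y : ℕ) : ZMod (n / (Nat.gcd x y) ^ 2)) := by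
    rw [ZMod.isUnit_iff_coprime]
    exact hcopm
  have hmul : (sOf k n x y) * ((y / Nat.gcd x y : ℕ) : ZMod (n / (Nat.gcd x y) ^ 2))
      = ((x / Nat.gcd x y : ℕ) : ZMod (n / (Nat.gcd x y) ^ 2)) := by
    rw [sOf, mul_assoc, ZMod.inv_mul_of_unit _ hyu, mul_one]
  refine ⟨?_, hmul⟩
  have hzero : ((x / Nat.gcd x y : ℕ) : ZMod (n / (Nat.gcd x y) ^ 2)) ^ 2
      + (k : ZMod (n / (Nat.gcd x y) ^ 2)) * ((y / Nat.gcd x y : ℕ) : ZMod (n / (Nat.gcd x y) ^ 2)) ^ 2 = 0 := by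
    have h0 : (((x / Nat.gcd x y) ^ 2 + k * (y / Nat.gcd x y) ^ 2 : ℕ)
        : ZMod (n / (Nat.gcd x y) ^ 2)) = 0 := by
      rw [← hm]; exact ZMod.natCast_self _
    push_cast at h0
    exact h0
  have hsq : (sOf k n x y) ^ 2 * ((y / Nat.gcd x y : ℕ) : ZMod (n / (Nat.gcd x y) ^ 2)) ^ 2
      = (-(k : ZMod (n / (Nat.gcd x y) ^ 2))) * ((y / Nat.gcd x y : ℕ) : ZMod (n / (Nat.gcd x y) ^ 2)) ^ 2 := by
    have h1 : (sOf k n x y * ((y / Nat.gcd x y : ℕ) : ZMod (n / (Nat.gcd x y) ^ 2))) ^ 2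
        = ((x / Nat.gcd x y : ℕ) : ZMod (n / (Nat.gcd x y) ^ 2)) ^ 2 := by rw [hmul]
    calc (sOf k n x y) ^ 2 * _ ^ 2 = (sOf k n x y * _) ^ 2 := by ring
      _ = ((x / Nat.gcd x y : ℕ) : ZMod (n / (Nat.gcd x y) ^ 2)) ^ 2 := h1
      _ = -(k : ZMod (n / (Nat.gcd x y) ^ 2))
          * ((y / Nat.gcd x y : ℕ) : ZMod (n / (Nat.gcd x y) ^ 2)) ^ 2 := by
          linear_combination hzero
  exact (hyu.pow 2).mul_right_cancel hsq

-- new material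
lemma FF_primes {k n x y : ℕ} : ∀ p ∈ FF k n x y, p.Prime := by
  intro p hp
  exact Nat.prime_of_mem_primeFactors (mem_FF.mp hp).1

lemma dOf_mem_divisors {k n x y : ℕ} (hn : 0 < n)
    (hg : 0 < Nat.gcd x y)
    (hnfac : n = (Nat.gcd x y) ^ 2 * (n / (Nat.gcd x y) ^ 2)) :
    dOf k n x y ∈ n.divisors := by
  have hm0 : n / (Nat.gcd x y) ^ 2 ≠ 0 := by
    intro h; rw [h, mul_zero] at hnfac; omega
  have hprod0 : (∏ p ∈ FF k n x y, p ^ fOf n x y p) ≠ 0 :=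
    prod_primes_pow_ne_zero FF_primes _
  have hproddvd : (∏ p ∈ FF k n x y, p ^ fOf n x y p) ∣ n / (Nat.gcd x y) ^ 2 := by
    rw [← Nat.factorization_le_iff_dvd hprod0 hm0]
    intro q
    rw [factorization_prod_primes_pow FF_primes]
    by_cases hq : q ∈ FF k n x y
    · rw [if_pos hq]; exact le_refl _
    · rw [if_neg hq]; exact Nat.zero_le _
  rw [Nat.mem_divisors]
  refine ⟨?_, hn.ne'⟩
  calc dOf k n x y = Nat.gcd x y * ∏ p ∈ FF k n x y, p ^ fOf n x y p := rfl
    _ ∣ Nat.gcd x y * (n / (Nat.gcd x y) ^ 2) := mul_dvd_mul_left _ hproddvd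
    _ ∣ n := ⟨Nat.gcd x y, by
        conv_lhs => rw [hnfac]
        ring⟩

lemma jOf_lt_six {k n x y : ℕ}
    (hm0 : n / (Nat.gcd x y) ^ 2 ≠ 0) : jOf k n x y < 6 := by
  rw [jOf]
  split_ifs with h1 h2 h3 h4
  · haveI : NeZero (2 ^ fOf n x y 2) := ⟨pow_ne_zero _ two_ne_zero⟩
    have := ZMod.val_lt (((sOf k n x y).val : ZMod (2 ^ fOf n x y 2)))
    have h2 : (2:ℕ) ^ fOf n x y 2 ≤ 2 ^ 2 := Nat.pow_le_pow_right (by norm_num) h1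
    omega
  all_goals omega

lemma label_inj {f k : ℕ} (hk : Squarefree k) (hf : 3 ≤ f) {a b : ZMod (2 ^ f)}
    (ha : a ^ 2 = -(k : ZMod (2 ^ f))) (hb : b ^ 2 = -(k : ZMod (2 ^ f)))
    (hj : (if a = sig k (2 ^ f) then (0:ℕ) else if a = - sig k (2 ^ f) then 1
        else if a = sig k (2 ^ f) + 2 ^ (f - 1) then 2 else 3)
      = (if b = sig k (2 ^ f) then (0:ℕ) else if b = - sig k (2 ^ f) then 1
        else if b = sig k (2 ^ f) + 2 ^ (f - 1) then 2 else 3)) : a = b := by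
  have hσ : (sig k (2 ^ f)) ^ 2 = -(k : ZMod (2 ^ f)) := sig_spec ha
  set σ := sig k (2 ^ f) with hσdef
  set H : ZMod (2 ^ f) := 2 ^ (f - 1) with hHdef
  set F : ZMod (2 ^ f) → ℕ := fun c =>
    if c = σ then (0:ℕ) else if c = - σ then 1 else if c = σ + H then 2 else 3 with hFdef
  have hj' : F a = F b := hj
  have hdec : ∀ c : ZMod (2 ^ f), c ^ 2 = -(k : ZMod (2 ^ f)) →
      ((F c = 0 → c = σ) ∧ (F c = 1 → c = -σ) ∧ (F c = 2 → c = σ + H) ∧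
        (F c = 3 → c = -σ + H)) := by
    intro c hc
    by_cases h1 : c = σ
    · refine ⟨fun _ => h1, fun hv => ?_, fun hv => ?_, fun hv => ?_⟩ <;>
        · exfalso; rw [hFdef] at hv; simp only [if_pos h1] at hv; omega
    · by_cases h2 : c = -σ
      · refine ⟨fun hv => ?_, fun _ => h2, fun hv => ?_, fun hv => ?_⟩ <;>
          · exfalso; rw [hFdef] at hv; simp only [if_neg h1, if_pos h2] at hv; omega
      · by_cases h3 : c = σ + H
        · refine ⟨fun hv => ?_, fun hv => ?_, fun _ => h3, fun hv => ?_⟩ <;>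
            · exfalso; rw [hFdef] at hv
              simp only [if_neg h1, if_neg h2, if_pos h3] at hv; omega
        · have h4 : c = -σ + H := by
            rcases two_root_cases hk hf hc hσ with h | h | h | h
            · exact absurd h h1
            · exact absurd h h2
            · exact absurd h h3
            · exact h
          refine ⟨fun hv => ?_, fun hv => ?_, fun hv => ?_, fun _ => h4⟩ <;>
            · exfalso; rw [hFdef] at hv
              simp only [if_neg h1, if_neg h2, if_neg h3] at hv; omega
  have hrange : F a = 0 ∨ F a = 1 ∨ F a = 2 ∨ F a = 3 := by
    rw [hFdef]; dsimp only; split_ifs <;> omega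
  obtain ⟨da0, da1, da2, da3⟩ := hdec a ha
  obtain ⟨db0, db1, db2, db3⟩ := hdec b hb
  rcases hrange with hv | hv | hv | hv
  · rw [da0 hv, db0 (hj' ▸ hv)]
  · rw [da1 hv, db1 (hj' ▸ hv)]
  · rw [da2 hv, db2 (hj' ▸ hv)]
  · rw [da3 hv, db3 (hj' ▸ hv)]

lemma dOf_factorization {k n x y : ℕ} (hg0 : Nat.gcd x y ≠ 0) (p : ℕ) :
    (dOf k n x y).factorization p
      = (Nat.gcd x y).factorization p + (if p ∈ FF k n x y then fOf n x y p else 0) := by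
  rw [dOf, Nat.factorization_mul hg0 (prod_primes_pow_ne_zero FF_primes _)]
  simp only [Finsupp.coe_add, Pi.add_apply]
  rw [factorization_prod_primes_pow FF_primes]

lemma exponent_eq {n x y : ℕ} (hg0 : Nat.gcd x y ≠ 0) (hm0 : n / Nat.gcd x y ^ 2 ≠ 0)
    (hnfac : n = (Nat.gcd x y) ^ 2 * (n / (Nat.gcd x y) ^ 2)) (p : ℕ) :
    n.factorization p = 2 * (Nat.gcd x y).factorization p + fOf n x y p := by
  have h1 : n.factorization = ((Nat.gcd x y) ^ 2 * (n / Nat.gcd x y ^ 2)).factorization := by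
    rw [← hnfac]
  rw [h1, Nat.factorization_mul (pow_ne_zero _ hg0) hm0, Nat.factorization_pow]
  simp only [Finsupp.coe_add, Pi.add_apply, Finsupp.smul_apply, smul_eq_mul]
  rfl

lemma key {k n : ℕ} (hk : Squarefree k) (hn : 0 < n) {x y x' y' : ℕ}
    (hx : 0 < x) (hy : 0 < y) (hxy : n = x ^ 2 + k * y ^ 2)
    (hx' : 0 < x') (hy' : 0 < y') (hxy' : n = x' ^ 2 + k * y' ^ 2)
    (hd : dOf k n x y = dOf k n x' y') (hj : jOf k n x y = jOf k n x' y') :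
    (x, y) = (x', y') := by
  obtain ⟨hg, hnfac, hmval, hcop, hX, hY⟩ := point_props hx hy hxy
  obtain ⟨hg', hnfac', hmval', hcop', hX', hY'⟩ := point_props hx' hy' hxy'
  obtain ⟨hs2, hsY⟩ := s_props hmval hcop
  obtain ⟨hs2', hsY'⟩ := s_props hmval' hcop'
  have hk0 : k ≠ 0 := by
    rintro rfl
    simpa using hk 0 (by norm_num)
  have hm0 : n / Nat.gcd x y ^ 2 ≠ 0 := by
    intro h; rw [h, mul_zero] at hnfac; omega
  have hm0' : n / Nat.gcd x' y' ^ 2 ≠ 0 := by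
    intro h; rw [h, mul_zero] at hnfac'; omega
  haveI : NeZero (n / Nat.gcd x y ^ 2) := ⟨hm0⟩
  haveI : NeZero (n / Nat.gcd x' y' ^ 2) := ⟨hm0'⟩
  have hg0 : Nat.gcd x y ≠ 0 := hg.ne'
  have hg0' : Nat.gcd x' y' ≠ 0 := hg'.ne'
  -- per-prime analysis
  have hper : ∀ p ∈ n.primeFactors,
      (Nat.gcd x y).factorization p = (Nat.gcd x' y').factorization p ∧
      fOf n x' y' p = fOf n x y p ∧
      ((sOf k n x y).val : ZMod (p ^ fOf n x y p))
        = ((sOf k n x' y').val : ZMod (p ^ fOf n x y p)) := by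
    intro p hpmem
    have hp : p.Prime := Nat.prime_of_mem_primeFactors hpmem
    have hv : (Nat.gcd x y).factorization p + (if p ∈ FF k n x y then fOf n x y p else 0)
        = (Nat.gcd x' y').factorization p + (if p ∈ FF k n x' y' then fOf n x' y' p else 0) := by
      have e1 := dOf_factorization (k := k) (n := n) hg0 p
      have e2 := dOf_factorization (k := k) (n := n) hg0' p
      rw [hd] at e1
      exact e1.symm.trans e2
    have hee : 2 * (Nat.gcd x y).factorization p + fOf n x y p
        = 2 * (Nat.gcd x' y').factorization p + fOf n x' y' p := by
      exact (exponent_eq hg0 hm0 hnfac p).symm.trans (exponent_eq hg0' hm0' hnfac' p)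
    have hroot : ((sOf k n x y).val : ZMod (p ^ fOf n x y p)) ^ 2
        = -(k : ZMod (p ^ fOf n x y p)) :=
      cast_root (Nat.ordProj_dvd _ _) hs2
    have hroot' : ((sOf k n x' y').val : ZMod (p ^ fOf n x' y' p)) ^ 2
        = -(k : ZMod (p ^ fOf n x' y' p)) :=
      cast_root (Nat.ordProj_dvd _ _) hs2'
    by_cases hp2 : p = 2
    · subst hp2
      have hnF : (2:ℕ) ∉ FF k n x y := fun hmem => ((mem_FF.mp hmem).2.1 rfl)
      have hnF' : (2:ℕ) ∉ FF k n x' y' := fun hmem => ((mem_FF.mp hmem).2.1 rfl)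
      rw [if_neg hnF, if_neg hnF', add_zero, add_zero] at hv
      have hff : fOf n x' y' 2 = fOf n x y 2 := by omega
      refine ⟨hv, hff, ?_⟩
      rw [jOf, jOf, hff] at hj
      rw [hff] at hroot'
      by_cases hf2 : fOf n x y 2 ≤ 2
      · rw [if_pos hf2, if_pos hf2] at hj
        haveI : NeZero (2 ^ fOf n x y 2) := ⟨pow_ne_zero _ two_ne_zero⟩
        exact ZMod.val_injective _ hj
      · rw [if_neg hf2, if_neg hf2] at hj
        exact label_inj hk (by omega) hroot hroot' hj
    · by_cases hpk : p ∣ k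
      · have hnF : p ∉ FF k n x y := fun hmem => ((mem_FF.mp hmem).2.2.1 hpk)
        have hnF' : p ∉ FF k n x' y' := fun hmem => ((mem_FF.mp hmem).2.2.1 hpk)
        rw [if_neg hnF, if_neg hnF', add_zero, add_zero] at hv
        have hff : fOf n x' y' p = fOf n x y p := by omega
        refine ⟨hv, hff, ?_⟩
        rw [hff] at hroot'
        exact dvd_root_unique hp hk hpk hroot hroot'
      · by_cases hc : p ∈ FF k n x y <;> by_cases hc' : p ∈ FF k n x' y'
        · rw [if_pos hc, if_pos hc'] at hv
          have haa : (Nat.gcd x y).factorization p = (Nat.gcd x' y').factorization p := by omega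
          have hff : fOf n x' y' p = fOf n x y p := by omega
          refine ⟨haa, hff, ?_⟩
          have h1 := (mem_FF.mp hc).2.2.2
          have h2 := (mem_FF.mp hc').2.2.2
          rw [hff] at h2
          exact h1.trans h2.symm
        · rw [if_pos hc, if_neg hc', add_zero] at hv
          have hf0 : fOf n x y p = 0 ∧ fOf n x' y' p = 0 := by omega
          refine ⟨by omega, by omega, ?_⟩
          exact subsingleton_of_eq_one (by rw [hf0.1, pow_zero]) _ _
        · rw [if_neg hc, if_pos hc', add_zero] at hv
          have hf0 : fOf n x y p = 0 ∧ fOf n x' y' p = 0 := by omega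
          refine ⟨by omega, by omega, ?_⟩
          exact subsingleton_of_eq_one (by rw [hf0.1, pow_zero]) _ _
        · rw [if_neg hc, if_neg hc', add_zero, add_zero] at hv
          have hff : fOf n x' y' p = fOf n x y p := by omega
          refine ⟨hv, hff, ?_⟩
          rcases Nat.eq_zero_or_pos (fOf n x y p) with hf0 | hfpos
          · exact subsingleton_of_eq_one (by rw [hf0, pow_zero]) _ _
          · have hσ : (sig k (p ^ fOf n x y p)) ^ 2 = -(k : ZMod (p ^ fOf n x y p)) :=
              sig_spec hroot
            have hna : ((sOf k n x y).val : ZMod (p ^ fOf n x y p)) ≠ sig k (p ^ fOf n x y p) :=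
              fun h => hc (mem_FF.mpr ⟨hpmem, hp2, hpk, h⟩)
            have hnb : ((sOf k n x' y').val : ZMod (p ^ fOf n x' y' p))
                ≠ sig k (p ^ fOf n x' y' p) :=
              fun h => hc' (mem_FF.mpr ⟨hpmem, hp2, hpk, h⟩)
            rw [hff] at hnb hroot'
            have hcase1 : ((sOf k n x y).val : ZMod (p ^ fOf n x y p))
                = - sig k (p ^ fOf n x y p) := by
              rcases odd_root_cases hp hp2 hpk hroot hσ with h | h
              · exact absurd h hna
              · exact h
            have hcase2 : ((sOf k n x' y').val : ZMod (p ^ fOf n x y p))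
                = - sig k (p ^ fOf n x y p) := by
              rcases odd_root_cases hp hp2 hpk hroot' hσ with h | h
              · exact absurd h hnb
              · exact h
            rw [hcase1, hcase2]
  -- g = g'
  have hgdvdn : Nat.gcd x y ∣ n := dvd_trans (dvd_pow_self _ two_ne_zero) ⟨_, hnfac⟩
  have hgdvdn' : Nat.gcd x' y' ∣ n := dvd_trans (dvd_pow_self _ two_ne_zero) ⟨_, hnfac'⟩
  have hgg : Nat.gcd x y = Nat.gcd x' y' := by
    apply Nat.factorization_inj hg0 hg0'
    ext p
    by_cases hpn : p ∈ n.primeFactors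
    · exact (hper p hpn).1
    · have z1 : (Nat.gcd x y).factorization p = 0 := by
        rw [← Finsupp.notMem_support_iff, Nat.support_factorization]
        exact fun h => hpn (Nat.primeFactors_mono hgdvdn hn.ne' h)
      have z2 : (Nat.gcd x' y').factorization p = 0 := by
        rw [← Finsupp.notMem_support_iff, Nat.support_factorization]
        exact fun h => hpn (Nat.primeFactors_mono hgdvdn' hn.ne' h)
      rw [z1, z2]
  have hmm : n / Nat.gcd x' y' ^ 2 = n / Nat.gcd x y ^ 2 := by rw [hgg]
  -- s congruence
  have hscong : (sOf k n x y).val ≡ (sOf k n x' y').val [MOD n / Nat.gcd x y ^ 2] := by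
    apply modEq_of_forall_prime_pow hm0
    intro p hpm
    have hmdvd : (n / Nat.gcd x y ^ 2) ∣ n := ⟨Nat.gcd x y ^ 2, by
      conv_lhs => rw [hnfac]
      ring⟩
    have hpn : p ∈ n.primeFactors := Nat.primeFactors_mono hmdvd hn.ne' hpm
    have h3 := (hper p hpn).2.2
    exact (ZMod.natCast_eq_natCast_iff _ _ _).mp h3
  -- recover normalized coordinates
  have h1 : (sOf k n x y).val * (y / Nat.gcd x y) ≡ x / Nat.gcd x y [MOD n / Nat.gcd x y ^ 2] := by
    apply (ZMod.natCast_eq_natCast_iff _ _ _).mp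
    push_cast
    rw [ZMod.natCast_val, ZMod.cast_id]
    exact hsY
  have h2 : (sOf k n x' y').val * (y' / Nat.gcd x' y') ≡ x' / Nat.gcd x' y'
      [MOD n / Nat.gcd x y ^ 2] := by
    rw [← hmm]
    apply (ZMod.natCast_eq_natCast_iff _ _ _).mp
    push_cast
    rw [ZMod.natCast_val, ZMod.cast_id]
    exact hsY'
  have hchain : (x / Nat.gcd x y) * (y' / Nat.gcd x' y')
      ≡ (x' / Nat.gcd x' y') * (y / Nat.gcd x y) [MOD n / Nat.gcd x y ^ 2] := by
    calc (x / Nat.gcd x y) * (y' / Nat.gcd x' y')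
        ≡ ((sOf k n x y).val * (y / Nat.gcd x y)) * (y' / Nat.gcd x' y')
          [MOD n / Nat.gcd x y ^ 2] := (h1.symm.mul_right _)
      _ = (sOf k n x y).val * ((y / Nat.gcd x y) * (y' / Nat.gcd x' y')) := by ring
      _ ≡ (sOf k n x' y').val * ((y / Nat.gcd x y) * (y' / Nat.gcd x' y'))
          [MOD n / Nat.gcd x y ^ 2] := (hscong.mul_right _)
      _ = ((sOf k n x' y').val * (y' / Nat.gcd x' y')) * (y / Nat.gcd x y) := by ring
      _ ≡ (x' / Nat.gcd x' y') * (y / Nat.gcd x y) [MOD n / Nat.gcd x y ^ 2] :=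
          (h2.mul_right _)
  -- bounds
  have hbound : ∀ {a b c d m : ℕ}, m = a ^ 2 + k * b ^ 2 → m = c ^ 2 + k * d ^ 2 →
      0 < a → 0 < b → 0 < c → 0 < d → a * d < m := by
    intro a b c d m hm1 hm2 ha hb hc hd
    have hk1 : 1 ≤ k := Nat.one_le_iff_ne_zero.mpr hk0
    have e1 : 1 ≤ k * b ^ 2 := Nat.mul_pos hk1 (pow_pos hb 2)
    have e2 : 1 ≤ c ^ 2 := pow_pos hc 2
    have e3 : d ^ 2 ≤ k * d ^ 2 := Nat.le_mul_of_pos_left _ hk1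
    have e4 : 1 ≤ a ^ 2 := pow_pos ha 2
    have hb1 : a ^ 2 ≤ m - 1 := by omega
    have hd1 : d ^ 2 ≤ m - 1 := by omega
    have hm1' : 1 ≤ m := by omega
    have hsq : (a * d) ^ 2 ≤ (m - 1) ^ 2 := by
      calc (a * d) ^ 2 = a ^ 2 * d ^ 2 := by ring
        _ ≤ (m - 1) * (m - 1) := Nat.mul_le_mul hb1 hd1
        _ = (m - 1) ^ 2 := by ring
    by_contra hcon
    push_neg at hcon
    have : m ^ 2 ≤ (a * d) ^ 2 := Nat.pow_le_pow_left hcon 2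
    have h9 : (m - 1) ^ 2 < m ^ 2 := Nat.pow_lt_pow_left (by omega) (by omega)
    omega
  have hb1 : (x / Nat.gcd x y) * (y' / Nat.gcd x' y') < n / Nat.gcd x y ^ 2 :=
    hbound hmval (hmm ▸ hmval') hX hY hX' hY'
  have hb2 : (x' / Nat.gcd x' y') * (y / Nat.gcd x y) < n / Nat.gcd x y ^ 2 :=
    hbound (hmm ▸ hmval') hmval hX' hY' hX hY
  have heqprod : (x / Nat.gcd x y) * (y' / Nat.gcd x' y')
      = (x' / Nat.gcd x' y') * (y / Nat.gcd x y) := hchain.eq_of_lt_of_lt hb1 hb2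
  -- coprimality finish
  have hdvd1 : (x / Nat.gcd x y) ∣ (x' / Nat.gcd x' y') := by
    apply hcop.dvd_of_dvd_mul_right
    exact ⟨y' / Nat.gcd x' y', heqprod.symm ▸ rfl⟩
  have hdvd2 : (x' / Nat.gcd x' y') ∣ (x / Nat.gcd x y) := by
    apply hcop'.dvd_of_dvd_mul_right
    exact ⟨y / Nat.gcd x y, heqprod ▸ rfl⟩
  have hXX : x / Nat.gcd x y = x' / Nat.gcd x' y' := Nat.dvd_antisymm hdvd1 hdvd2
  have hYY : y / Nat.gcd x y = y' / Nat.gcd x' y' := by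
    have := heqprod
    rw [hXX] at this
    exact (Nat.eq_of_mul_eq_mul_left (hXX ▸ hX) this).symm
  have hxfin : x = x' := by
    have e1 : Nat.gcd x y * (x / Nat.gcd x y) = x := Nat.mul_div_cancel' (Nat.gcd_dvd_left x y)
    have e2 : Nat.gcd x' y' * (x' / Nat.gcd x' y') = x' :=
      Nat.mul_div_cancel' (Nat.gcd_dvd_left x' y')
    rw [← e1, ← e2, hXX, hgg]
  have hyfin : y = y' := by
    have e1 : Nat.gcd x y * (y / Nat.gcd x y) = y := Nat.mul_div_cancel' (Nat.gcd_dvd_right x y)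
    have e2 : Nat.gcd x' y' * (y' / Nat.gcd x' y') = y' :=
      Nat.mul_div_cancel' (Nat.gcd_dvd_right x' y')
    rw [← e1, ← e2, hYY, hgg]
  rw [hxfin, hyfin]


end RepCountAux

open RepCountAux in
theorem rep_count_le (k n : ℕ) (hk : Squarefree k) (hn : 0 < n) :
    {p : ℕ × ℕ | 0 < p.1 ∧ 0 < p.2 ∧ n = p.1 ^ 2 + k * p.2 ^ 2}.ncard
      ≤ 6 * n.divisors.card := by
  classical
  have hinj : Set.InjOn (phi k n)
      {p : ℕ × ℕ | 0 < p.1 ∧ 0 < p.2 ∧ n = p.1 ^ 2 + k * p.2 ^ 2} := by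
    rintro ⟨x, y⟩ ⟨hx, hy, hxy⟩ ⟨x', y'⟩ ⟨hx', hy', hxy'⟩ heq
    have hd : dOf k n x y = dOf k n x' y' := congrArg Prod.fst heq
    have hj : jOf k n x y = jOf k n x' y' := congrArg Prod.snd heq
    exact key hk hn hx hy hxy hx' hy' hxy' hd hj
  have hmaps : ∀ pt ∈ {p : ℕ × ℕ | 0 < p.1 ∧ 0 < p.2 ∧ n = p.1 ^ 2 + k * p.2 ^ 2},
      phi k n pt ∈ (n.divisors ×ˢ Finset.range 6 : Finset (ℕ × ℕ)) := by
    rintro ⟨x, y⟩ ⟨hx, hy, hxy⟩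
    obtain ⟨hg, hnfac, hmval, hcop, hX, hY⟩ := point_props hx hy hxy
    have hm0 : n / Nat.gcd x y ^ 2 ≠ 0 := by
      intro h; rw [h, mul_zero] at hnfac; omega
    rw [Finset.mem_product]
    exact ⟨dOf_mem_divisors hn hg hnfac, Finset.mem_range.mpr (jOf_lt_six hm0)⟩
  calc {p : ℕ × ℕ | 0 < p.1 ∧ 0 < p.2 ∧ n = p.1 ^ 2 + k * p.2 ^ 2}.ncard
      = (phi k n '' {p : ℕ × ℕ | 0 < p.1 ∧ 0 < p.2 ∧ n = p.1 ^ 2 + k * p.2 ^ 2}).ncard :=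
        (Set.ncard_image_of_injOn hinj).symm
    _ ≤ ((n.divisors ×ˢ Finset.range 6 : Finset (ℕ × ℕ)) : Set (ℕ × ℕ)).ncard := by
        apply Set.ncard_le_ncard
        · rintro q ⟨pt, hpt, rfl⟩
          exact_mod_cast hmaps pt hpt
        · exact (n.divisors ×ˢ Finset.range 6).finite_toSet
    _ = (n.divisors ×ˢ Finset.range 6).card := Set.ncard_coe_finset _
    _ = n.divisors.card * 6 := by rw [Finset.card_product, Finset.card_range]
    _ = 6 * n.divisors.card := mul_comm _ _
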